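/- Let E be a real inner product space, let T ≥ 1 be a natural number, let L : E → ℝ be convex and differentiable, let θ* ∈ E, let Δ > 0, σ > 0 and α > 0, and let θ_0, θ_1, …, θ_T ∈ E satisfy θ_{t+1} = θ_t − α·g_t for t = 0, …, T−1, where each g_t ∈ E satisfies ‖g_t‖ ≤ σ, ‖θ_0 − θ*‖ ≤ Δ, and ‖θ_t − θ*‖ ≤ Δ for all t = 0, …, T−1. Then (1/T)·∑_{t=0}^{T−1} (L(θ_t) − L(θ*)) ≤ Δ²/(2αT) + ασ²/2 + (Δ/T)·∑_{t=0}^{T−1} ‖∇L(θ_t) − g_t‖. -/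

import Mathlib

open Finset
open scoped RealInnerProductSpace

lemma convex_grad_ineq {E : Type*} [NormedAddCommGroup E] [InnerProductSpace ℝ E]
    (L : E → ℝ) (gradL : E → E)
    (hconv : ConvexOn ℝ Set.univ L)
    (hgrad : ∀ x, HasFDerivAt L (innerSL ℝ (gradL x)) x)
    (x y : E) : L x - L y ≤ ⟪gradL x, x - y⟫ := by
  set c : ℝ → E := fun s => y + s • (x - y) with hc
  have hφconv : ConvexOn ℝ Set.univ (L ∘ (AffineMap.lineMap y x : ℝ →ᵃ[ℝ] E)) := by
    have := hconv.comp_affineMap (AffineMap.lineMap y x : ℝ →ᵃ[ℝ] E)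
    simpa using this
  have hcderiv : ∀ s : ℝ, HasDerivAt (fun s : ℝ => (AffineMap.lineMap y x : ℝ →ᵃ[ℝ] E) s)
      (x - y) s := by
    intro s
    simp only [AffineMap.lineMap_apply_module]
    have h1 : HasDerivAt (fun s : ℝ => s • x + (1 - s) • y) (x - y) s := by
      have := ((hasDerivAt_id s).smul_const x).add
        (((hasDerivAt_const s (1:ℝ)).sub (hasDerivAt_id s)).smul_const y)
      simpa [sub_smul, smul_sub, sub_eq_add_neg, Pi.add_def] using this
    simpa [add_comm] using h1
  have hφd : HasDerivAt (L ∘ (AffineMap.lineMap y x : ℝ →ᵃ[ℝ] E))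
      ⟪gradL ((AffineMap.lineMap y x : ℝ →ᵃ[ℝ] E) 1), x - y⟫ 1 := by
    have := (hgrad ((AffineMap.lineMap y x : ℝ →ᵃ[ℝ] E) 1)).comp_hasDerivAt 1 (hcderiv 1)
    simpa using this
  have h01 : (0:ℝ) < 1 := one_pos
  have := hφconv.slope_le_of_hasDerivAt (Set.mem_univ 0) (Set.mem_univ 1) h01 hφd
  have hl1 : (AffineMap.lineMap y x : ℝ →ᵃ[ℝ] E) 1 = x := by simp
  have hs : slope (L ∘ (AffineMap.lineMap y x : ℝ →ᵃ[ℝ] E)) 0 1 = L x - L y := by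
    simp [slope, Function.comp, AffineMap.lineMap_apply_module]
  rw [hs] at this
  simpa using this

theorem approx_gd_average_bound_convex
    {E : Type*} [NormedAddCommGroup E] [InnerProductSpace ℝ E]
    (T : ℕ) (hT : 1 ≤ T)
    (L : E → ℝ) (gradL : E → E)
    (hconv : ConvexOn ℝ Set.univ L)
    (hgrad : ∀ x, HasFDerivAt L (innerSL ℝ (gradL x)) x)
    (θstar : E) (Δ σ α : ℝ) (hΔ : 0 < Δ) (hσ : 0 < σ) (hα : 0 < α)
    (θ g : ℕ → E)
    (hupd : ∀ t < T, θ (t + 1) = θ t - α • g t)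
    (hg : ∀ t < T, ‖g t‖ ≤ σ)
    (hθ0 : ‖θ 0 - θstar‖ ≤ Δ)
    (hθ : ∀ t < T, ‖θ t - θstar‖ ≤ Δ) :
    (1 / T) * ∑ t ∈ Finset.range T, (L (θ t) - L θstar)
      ≤ Δ ^ 2 / (2 * α * T) + α * σ ^ 2 / 2
        + (Δ / T) * ∑ t ∈ Finset.range T, ‖gradL (θ t) - g t‖ := by
  have hT' : (0:ℝ) < T := by exact_mod_cast Nat.lt_of_lt_of_le Nat.zero_lt_one hT
  set r : ℕ → E := fun t => θ t - θstar with hr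
  have key : ∀ t < T, L (θ t) - L θstar ≤
      (‖r t‖^2 - ‖r (t+1)‖^2) / (2*α) + α * σ^2 / 2
      + ‖gradL (θ t) - g t‖ * Δ := by
    intro t ht
    have h1 : L (θ t) - L θstar ≤ ⟪gradL (θ t), r t⟫ :=
      convex_grad_ineq L gradL hconv hgrad (θ t) θstar
    have hsplit : ⟪gradL (θ t), r t⟫ = ⟪g t, r t⟫ + ⟪gradL (θ t) - g t, r t⟫ := by
      rw [inner_sub_left]; ring
    have hnorm : ‖r (t+1)‖^2 = ‖r t‖^2 - 2*α*⟪g t, r t⟫ + α^2 * ‖g t‖^2 := by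
      have h2 : r (t+1) = r t - α • g t := by
        simp only [hr]; rw [hupd t ht]; abel
      rw [h2, norm_sub_sq_real, inner_smul_right, norm_smul]
      rw [real_inner_comm]
      simp [abs_of_pos hα, mul_pow]
      ring
    have hinner1 : ⟪g t, r t⟫ = (‖r t‖^2 - ‖r (t+1)‖^2) / (2*α) + α * ‖g t‖^2 / 2 := by
      rw [hnorm]; field_simp; ring
    have hinner2 : ⟪gradL (θ t) - g t, r t⟫ ≤ ‖gradL (θ t) - g t‖ * Δ := by
      calc ⟪gradL (θ t) - g t, r t⟫ ≤ ‖gradL (θ t) - g t‖ * ‖r t‖ := real_inner_le_norm _ _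
      _ ≤ ‖gradL (θ t) - g t‖ * Δ := by
          exact mul_le_mul_of_nonneg_left (hθ t ht) (norm_nonneg _)
    have hgbd : α * ‖g t‖^2 / 2 ≤ α * σ^2 / 2 := by
      have := hg t ht
      have h2 : ‖g t‖^2 ≤ σ^2 := by
        apply pow_le_pow_left₀ (norm_nonneg _) this
      nlinarith
    calc L (θ t) - L θstar ≤ ⟪gradL (θ t), r t⟫ := h1
    _ = (‖r t‖^2 - ‖r (t+1)‖^2) / (2*α) + α * ‖g t‖^2 / 2 + ⟪gradL (θ t) - g t, r t⟫ := by
        rw [hsplit, hinner1]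
    _ ≤ (‖r t‖^2 - ‖r (t+1)‖^2) / (2*α) + α * σ^2 / 2 + ‖gradL (θ t) - g t‖ * Δ := by
        gcongr
  have hsum : ∑ t ∈ Finset.range T, (L (θ t) - L θstar) ≤
      Δ^2 / (2*α) + T * (α * σ^2 / 2) + Δ * ∑ t ∈ Finset.range T, ‖gradL (θ t) - g t‖ := by
    have h1 : ∑ t ∈ Finset.range T, (L (θ t) - L θstar) ≤
        ∑ t ∈ Finset.range T, ((‖r t‖^2 - ‖r (t+1)‖^2) / (2*α) + α * σ^2 / 2
          + ‖gradL (θ t) - g t‖ * Δ) := by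
      apply Finset.sum_le_sum
      intro t ht
      exact key t (Finset.mem_range.mp ht)
    have htel : ∑ t ∈ Finset.range T, (‖r t‖^2 - ‖r (t+1)‖^2) = ‖r 0‖^2 - ‖r T‖^2 :=
      Finset.sum_range_sub' (fun t => ‖r t‖^2) T
    have h2 : ∑ t ∈ Finset.range T, ((‖r t‖^2 - ‖r (t+1)‖^2) / (2*α) + α * σ^2 / 2
          + ‖gradL (θ t) - g t‖ * Δ)
        = (‖r 0‖^2 - ‖r T‖^2) / (2*α) + T * (α * σ^2 / 2)
          + Δ * ∑ t ∈ Finset.range T, ‖gradL (θ t) - g t‖ := by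
      rw [Finset.sum_add_distrib, Finset.sum_add_distrib, ← Finset.sum_div, htel,
        Finset.sum_const, Finset.card_range, Finset.mul_sum]
      simp only [nsmul_eq_mul]
      congr 1
      apply Finset.sum_congr rfl
      intro t _
      ring
    have h01 : ‖r 0‖^2 ≤ Δ^2 := pow_le_pow_left₀ (norm_nonneg _) hθ0 2
    have hrT : (0:ℝ) ≤ ‖r T‖^2 := by positivity
    have h3 : (‖r 0‖^2 - ‖r T‖^2) / (2*α) ≤ Δ^2 / (2*α) := by
      gcongr
      linarith
    linarith [h1, h2 ▸ h1]
  calc (1 / (T:ℝ)) * ∑ t ∈ Finset.range T, (L (θ t) - L θstar)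
      ≤ (1 / (T:ℝ)) * (Δ^2 / (2*α) + T * (α * σ^2 / 2)
          + Δ * ∑ t ∈ Finset.range T, ‖gradL (θ t) - g t‖) := by
        apply mul_le_mul_of_nonneg_left hsum
        positivity
    _ = Δ ^ 2 / (2 * α * T) + α * σ ^ 2 / 2
        + (Δ / T) * ∑ t ∈ Finset.range T, ‖gradL (θ t) - g t‖ := by
        field_simp
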